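/- Let G be a finite simple graph with at least two vertices and no well-connected vertex, and let n ≥ 2. Then the connective eccentric index of the join nG of n disjoint copies of G equals n·|E(G)| + (n(n−1)/2)·|V(G)|². -/

import Mathlib

/-- The eccentricity of a vertex `v` in a finite graph `G`:
the maximum distance from `v` to any other vertex. -/
noncomputable def eccentricity {V : Type*} [Fintype V] (G : SimpleGraph V) (v : V) : ℕ :=
  Finset.univ.sup fun u => G.dist v u

/-- The connective eccentric index `C^ξ(G) = ∑_v deg(v)/ε(v)`, as a rational number. -/
noncomputable def connEccIndex {V : Type*} [Fintype V] (G : SimpleGraph V) : ℚ :=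
  letI := Classical.decRel G.Adj
  ∑ v : V, (G.degree v : ℚ) / (eccentricity G v)

/-- The number of edges of `G`. -/
noncomputable def numEdges {V : Type*} (G : SimpleGraph V) : ℕ := G.edgeSet.ncard

/-- A vertex is well-connected if it is adjacent to every other vertex. -/
def IsWellConnected {V : Type*} (G : SimpleGraph V) (v : V) : Prop :=
  ∀ u : V, u ≠ v → G.Adj v u

/-- The join `G₁ + ⋯ + G_k` of a family of graphs on pairwise disjoint vertex sets:
all edges of the `G i`, together with all pairs of vertices lying in two different parts. -/
def multiJoin {ι : Type*} {V : ι → Type*} (G : ∀ i, SimpleGraph (V i)) :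
    SimpleGraph (Σ i, V i) where
  Adj x y := x.1 ≠ y.1 ∨ ∃ h : x.1 = y.1, (G y.1).Adj (h ▸ x.2) y.2
  symm := by
    constructor
    rintro ⟨i, u⟩ ⟨j, v⟩ h
    dsimp only at h ⊢
    rcases h with hne | ⟨rfl, hadj⟩
    · exact Or.inl hne.symm
    · exact Or.inr ⟨rfl, (G i).symm.symm _ _ hadj⟩
  loopless := by
    constructor
    rintro ⟨i, u⟩ h
    dsimp only at h
    rcases h with hne | ⟨h, hadj⟩
    · exact hne rfl
    · exact (G i).loopless.irrefl u hadj

/-- The join `nG` of `n` disjoint copies of `G`. -/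
def nJoin {V : Type*} (n : ℕ) (G : SimpleGraph V) : SimpleGraph (Σ _ : Fin n, V) :=
  multiJoin fun _ : Fin n => G

set_option linter.unusedSectionVars false

section Aux
variable {V : Type*} [Fintype V] (G : SimpleGraph V)

lemma nJoin_adj {n : ℕ} (i j : Fin n) (u v : V) :
    (nJoin n G).Adj ⟨i, u⟩ ⟨j, v⟩ ↔ i ≠ j ∨ (i = j ∧ G.Adj u v) := by
  constructor
  · rintro (h | ⟨heq, h⟩)
    · exact Or.inl h
    · have hij : i = j := heq
      subst hij
      refine Or.inr ⟨rfl, ?_⟩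
      simpa [eq_rec_constant] using h
  · rintro (h | ⟨rfl, h⟩)
    · exact Or.inl h
    · exact Or.inr ⟨rfl, h⟩

lemma nJoin_dist_le_two {n : ℕ} (hn : 2 ≤ n) [Nonempty V]
    (x y : Σ _ : Fin n, V) : (nJoin n G).dist x y ≤ 2 := by
  obtain ⟨i, u⟩ := x; obtain ⟨j, v⟩ := y
  by_cases hij : i = j
  · subst hij
    by_cases huv : u = v
    · subst huv; simp [SimpleGraph.dist_self]
    · by_cases hadj : G.Adj u v
      · have h : (nJoin n G).Adj ⟨i, u⟩ ⟨i, v⟩ :=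
          (nJoin_adj G i i u v).mpr (Or.inr ⟨rfl, hadj⟩)
        exact le_trans (SimpleGraph.dist_le h.toWalk) (by norm_num)
      · have hn1 : 1 < Fintype.card (Fin n) := by rw [Fintype.card_fin]; omega
        obtain ⟨j', hj'⟩ := Fintype.exists_ne_of_one_lt_card hn1 i
        obtain ⟨w⟩ := (inferInstance : Nonempty V)
        have h1 : (nJoin n G).Adj ⟨i, u⟩ ⟨j', w⟩ :=
          (nJoin_adj G i j' u w).mpr (Or.inl (Ne.symm hj'))
        have h2 : (nJoin n G).Adj ⟨j', w⟩ ⟨i, v⟩ :=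
          (nJoin_adj G j' i w v).mpr (Or.inl hj')
        simpa using SimpleGraph.dist_le (SimpleGraph.Walk.cons h1 (SimpleGraph.Walk.cons h2 SimpleGraph.Walk.nil))
  · have h : (nJoin n G).Adj ⟨i, u⟩ ⟨j, v⟩ :=
      (nJoin_adj G i j u v).mpr (Or.inl hij)
    exact le_trans (SimpleGraph.dist_le h.toWalk) (by norm_num)

lemma eccentricity_nJoin {n : ℕ} (hn : 2 ≤ n) (hV : 2 ≤ Fintype.card V)
    (hwc : ∀ v : V, ¬ IsWellConnected G v) (x : Σ _ : Fin n, V) :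
    eccentricity (nJoin n G) x = 2 := by
  have : Nonempty V := Fintype.card_pos_iff.mp (by omega)
  refine le_antisymm (Finset.sup_le fun y _ => nJoin_dist_le_two G hn x y) ?_
  obtain ⟨i, v⟩ := x
  have := hwc v
  rw [IsWellConnected] at this
  push_neg at this
  obtain ⟨u, hu, hadj⟩ := this
  have hnadj : ¬ (nJoin n G).Adj ⟨i, v⟩ ⟨i, u⟩ := by
    rw [nJoin_adj]
    rintro (h | ⟨-, h⟩)
    · exact h rfl
    · exact hadj h
  have hn1 : 1 < Fintype.card (Fin n) := by rw [Fintype.card_fin]; omega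
  obtain ⟨j', hj'⟩ := Fintype.exists_ne_of_one_lt_card hn1 i
  obtain ⟨w⟩ := (inferInstance : Nonempty V)
  have h1 : (nJoin n G).Adj ⟨i, v⟩ ⟨j', w⟩ :=
    (nJoin_adj G i j' v w).mpr (Or.inl (Ne.symm hj'))
  have h2 : (nJoin n G).Adj ⟨j', w⟩ ⟨i, u⟩ :=
    (nJoin_adj G j' i w u).mpr (Or.inl hj')
  have hreach : (nJoin n G).Reachable ⟨i, v⟩ ⟨i, u⟩ :=
    ⟨SimpleGraph.Walk.cons h1 (SimpleGraph.Walk.cons h2 SimpleGraph.Walk.nil)⟩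
  have hne : (⟨i, v⟩ : Σ _ : Fin n, V) ≠ ⟨i, u⟩ := by
    simp [Ne.symm hu]
  have hpos : 0 < (nJoin n G).dist ⟨i, v⟩ ⟨i, u⟩ := hreach.pos_dist_of_ne hne
  have hone : (nJoin n G).dist ⟨i, v⟩ ⟨i, u⟩ ≠ 1 := fun h =>
    hnadj (SimpleGraph.dist_eq_one_iff_adj.mp h)
  have h2' : 2 ≤ (nJoin n G).dist ⟨i, v⟩ ⟨i, u⟩ := by omega
  exact le_trans h2' (Finset.le_sup (Finset.mem_univ (⟨i, u⟩ : Σ _ : Fin n, V)))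

noncomputable def nJoinNeighborEquiv {n : ℕ} (i : Fin n) (v : V) :
    ((nJoin n G).neighborSet ⟨i, v⟩) ≃ (G.neighborSet v) ⊕ ({j : Fin n // j ≠ i} × V) where
  toFun y :=
    if h : y.1.1 = i then
      Sum.inl ⟨y.1.2, by
        have hadj : (nJoin n G).Adj ⟨i, v⟩ ⟨y.1.1, y.1.2⟩ := y.2
        rcases (nJoin_adj G i y.1.1 v y.1.2).mp hadj with hne | ⟨-, h'⟩
        · exact absurd h.symm hne
        · exact h'⟩
    else Sum.inr (⟨y.1.1, h⟩, y.1.2)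
  invFun s :=
    match s with
    | Sum.inl ⟨u, hu⟩ => ⟨⟨i, u⟩, (nJoin_adj G i i v u).mpr (Or.inr ⟨rfl, hu⟩)⟩
    | Sum.inr (⟨j, hj⟩, u) => ⟨⟨j, u⟩, (nJoin_adj G i j v u).mpr (Or.inl (Ne.symm hj))⟩
  left_inv := by
    rintro ⟨⟨j, u⟩, hadj⟩
    dsimp only
    split_ifs with h
    · subst h; rfl
    · rfl
  right_inv := by
    rintro (⟨u, hu⟩ | ⟨⟨j, hj⟩, u⟩)
    · simp
    · simp [hj]

lemma card_neighborSet_nJoin {n : ℕ} (i : Fin n) (v : V)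
    [Fintype (G.neighborSet v)] [Fintype ((nJoin n G).neighborSet ⟨i, v⟩)] :
    Fintype.card ((nJoin n G).neighborSet ⟨i, v⟩)
      = Fintype.card (G.neighborSet v) + (n - 1) * Fintype.card V := by
  classical
  rw [Fintype.card_congr (nJoinNeighborEquiv G i v)]
  simp only [Fintype.card_sum, Fintype.card_prod]
  congr 1
  congr 1
  rw [Fintype.card_subtype_compl, Fintype.card_subtype_eq, Fintype.card_fin]

end Aux

theorem connEccIndex_nJoin {V : Type*} [Fintype V] (G : SimpleGraph V)
    (hV : 2 ≤ Fintype.card V) (hwc : ∀ v : V, ¬ IsWellConnected G v)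
    (n : ℕ) (hn : 2 ≤ n) :
    connEccIndex (nJoin n G) =
      (n : ℚ) * (numEdges G : ℚ)
        + ((n : ℚ) * ((n : ℚ) - 1) / 2) * (Fintype.card V : ℚ) ^ 2 := by
  classical
  have hecc := eccentricity_nJoin G hn hV hwc
  have hdeg : ∀ (i : Fin n) (v : V), (((nJoin n G).degree ⟨i, v⟩ : ℕ) : ℚ)
      = (G.degree v : ℚ) + ((n : ℚ) - 1) * (Fintype.card V : ℚ) := by
    intro i v
    rw [← SimpleGraph.card_neighborSet_eq_degree, ← SimpleGraph.card_neighborSet_eq_degree,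
      card_neighborSet_nJoin]
    push_cast [Nat.cast_sub (by omega : 1 ≤ n)]
    ring
  have hsum : ∑ v : V, (G.degree v : ℚ) = 2 * (numEdges G : ℚ) := by
    have h1 : ∑ v : V, G.degree v = 2 * G.edgeFinset.card :=
      SimpleGraph.sum_degrees_eq_twice_card_edges G
    have h2 : numEdges G = G.edgeFinset.card := by
      rw [numEdges, Set.ncard_eq_toFinset_card']
      exact congrArg Finset.card (by ext; simp)
    rw [h2]
    exact_mod_cast h1
  rw [connEccIndex]
  simp only [hecc]
  rw [← Finset.univ_sigma_univ, Finset.sum_sigma]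
  have hinner : ∀ i : Fin n, ∑ v : V, (((nJoin n G).degree ⟨i, v⟩ : ℕ) : ℚ) / ((2 : ℕ) : ℚ)
      = (numEdges G : ℚ) + ((n : ℚ) - 1) * (Fintype.card V : ℚ) ^ 2 / 2 := by
    intro i
    simp only [hdeg]
    rw [← Finset.sum_div, Finset.sum_add_distrib, hsum, Finset.sum_const, Finset.card_univ,
      nsmul_eq_mul]
    push_cast
    ring
  simp only [hinner, Finset.sum_const, Finset.card_univ, Fintype.card_fin, nsmul_eq_mul]
  ring
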